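/- Let w : ℝ³ → ℝ³ be continuously differentiable with div w(x) = 0 for all x ∈ ℝ³ and with ∫_{ℝ³} |w(x)|² dx < ∞, and let u : ℝ³ → ℝ³ be continuously differentiable with compact support. Set K := sup_{x ∈ ℝ³} ‖Du(x)‖ (finite, since Du is continuous and compactly supported). Then |∫_{ℝ³} ((curl w)(x) × w(x)) · u(x) dx| ≤ (5/2) · K · ∫_{ℝ³} |w(x)|² dx. -/

import Mathlib

open scoped RealInnerProductSpace
open MeasureTheory

noncomputable section

/-- Three-dimensional Euclidean space. -/
abbrev E3 : Type := EuclideanSpace ℝ (Fin 3)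

/-- Cross product of vectors in `E3`. -/
def cross (a b : E3) : E3 :=
  WithLp.toLp 2 ![a 1 * b 2 - a 2 * b 1, a 2 * b 0 - a 0 * b 2, a 0 * b 1 - a 1 * b 0]

/-- Divergence of a vector field: trace of the Jacobian,
`div v (x) = ∑ i, ∂ᵢ vᵢ (x)`. -/
def vdiv (v : E3 → E3) (x : E3) : ℝ :=
  ∑ i, fderiv ℝ v x (EuclideanSpace.single i 1) i

/-- Curl of a vector field (with 0-indexed coordinates):
`curl v = (∂₁v₂ − ∂₂v₁, ∂₂v₀ − ∂₀v₂, ∂₀v₁ − ∂₁v₀)`. -/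
def curl (v : E3 → E3) (x : E3) : E3 :=
  WithLp.toLp 2 ![fderiv ℝ v x (EuclideanSpace.single 1 1) 2 - fderiv ℝ v x (EuclideanSpace.single 2 1) 1,
    fderiv ℝ v x (EuclideanSpace.single 2 1) 0 - fderiv ℝ v x (EuclideanSpace.single 0 1) 2,
    fderiv ℝ v x (EuclideanSpace.single 0 1) 1 - fderiv ℝ v x (EuclideanSpace.single 1 1) 0]

/-! ### Auxiliary material -/

/-- The `i`-th standard basis vector of `E3`. -/
def ee (i : Fin 3) : E3 := EuclideanSpace.single i 1

lemma abs_coord_le (v : E3) (i : Fin 3) : |v i| ≤ ‖v‖ := by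
  have h : ⟪(EuclideanSpace.single i (1:ℝ) : E3), v⟫ = v i := by
    simp [EuclideanSpace.inner_single_left]
  calc |v i| = |⟪(EuclideanSpace.single i (1:ℝ) : E3), v⟫| := by rw [h]
    _ ≤ ‖(EuclideanSpace.single i (1:ℝ) : E3)‖ * ‖v‖ := abs_real_inner_le_norm _ _
    _ = ‖v‖ := by simp [EuclideanSpace.norm_single]

lemma sum_smul_ee (b : E3) : ∑ j, b j • ee j = b := by
  ext i
  rw [show ((∑ j, b j • ee j : E3) i) = ∑ j, b j * (ee j) i from by rw [WithLp.ofLp_sum, Finset.sum_apply]; rfl]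
  simp [ee, EuclideanSpace.single_apply]

lemma clm_apply_decomp (T : E3 →L[ℝ] E3) (b : E3) (i : Fin 3) :
    T b i = ∑ j, b j * T (ee j) i := by
  conv_lhs => rw [← sum_smul_ee b]
  rw [map_sum]
  have h : ((∑ j, T (b j • ee j)) : E3) i = ∑ j, (T (b j • ee j)) i := by
    rw [WithLp.ofLp_sum, Finset.sum_apply]
  rw [h]
  refine Finset.sum_congr rfl fun j _ => ?_
  rw [_root_.map_smul]
  rfl

lemma coord_contDiff {v : E3 → E3} (hv : ContDiff ℝ 1 v) (i : Fin 3) :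
    ContDiff ℝ 1 (fun y => v y i) :=
  (EuclideanSpace.proj (𝕜 := ℝ) (i := i)).contDiff.comp hv

lemma fderiv_coord {v : E3 → E3} {x : E3} (hv : DifferentiableAt ℝ v x) (i : Fin 3) (a : E3) :
    fderiv ℝ (fun y => v y i) x a = fderiv ℝ v x a i := by
  have h : fderiv ℝ (fun y => v y i) x
      = (EuclideanSpace.proj (𝕜 := ℝ) (i := i) : E3 →L[ℝ] ℝ).comp (fderiv ℝ v x) :=
    ((EuclideanSpace.proj (𝕜 := ℝ) (i := i) : E3 →L[ℝ] ℝ).hasFDerivAt.comp x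
      hv.hasFDerivAt).fderiv
  rw [h]; rfl

lemma norm_sq_eq_sum (v : E3) : ‖v‖ ^ 2 = ∑ i, v i ^ 2 := by
  rw [EuclideanSpace.norm_eq, Real.sq_sqrt (Finset.sum_nonneg fun i _ => sq_nonneg _)]
  simp [Real.norm_eq_abs, sq_abs]

lemma inner_eq_sum (a b : E3) : ⟪a, b⟫ = ∑ i, a i * b i := by
  simp [PiLp.inner_apply]
  exact Finset.sum_congr rfl fun i _ => mul_comm _ _

lemma pointwise_cross_curl (w u : E3 → E3) (x : E3) :
    ⟪cross (curl w x) (w x), u x⟫ =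
      (∑ i, ∑ j, fderiv ℝ w x (ee j) i * w x j * u x i)
      - (∑ i, ∑ j, fderiv ℝ w x (ee i) j * w x j * u x i) := by
  rw [inner_eq_sum]
  simp only [cross, curl, ee, Fin.sum_univ_three, Matrix.cons_val',
    Matrix.cons_val_zero, Matrix.cons_val_one, PiLp.toLp_apply, Matrix.head_cons, Matrix.cons_val_two,
    Matrix.tail_cons]
  ring

/-- For `w` continuously differentiable, divergence-free and square
integrable, and `u` continuously differentiable with compact support, with
`K := ⨆ x, ‖Du(x)‖`, one has `|∫ ((curl w) × w) · u| ≤ (5/2) K ∫ |w|²`. -/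
theorem abs_integral_curl_cross_inner_le
    (w u : E3 → E3) (hw : ContDiff ℝ 1 w) (hwdiv : ∀ x, vdiv w x = 0)
    (hwL2 : Integrable (fun x => ‖w x‖ ^ 2))
    (hu : ContDiff ℝ 1 u) (husupp : HasCompactSupport u) :
    |∫ x, ⟪cross (curl w x) (w x), u x⟫|
      ≤ (5 / 2) * (⨆ x, ‖fderiv ℝ u x‖) * ∫ x, ‖w x‖ ^ 2 := by
  classical
  have hwd : Differentiable ℝ w := hw.differentiable one_ne_zero
  have hud : Differentiable ℝ u := hu.differentiable one_ne_zero
  have hwc : Continuous w := hw.continuous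
  have huc : Continuous u := hu.continuous
  have hwci : ∀ i : Fin 3, Continuous fun x => w x i := fun i =>
    (EuclideanSpace.proj (𝕜 := ℝ) (i := i)).continuous.comp hwc
  have huci : ∀ i : Fin 3, Continuous fun x => u x i := fun i =>
    (EuclideanSpace.proj (𝕜 := ℝ) (i := i)).continuous.comp huc
  have hAc : ∀ i j : Fin 3, Continuous fun x => fderiv ℝ w x (ee j) i := fun i j =>
    (EuclideanSpace.proj (𝕜 := ℝ) (i := i)).continuous.comp
      ((hw.continuous_fderiv one_ne_zero).clm_apply continuous_const)
  have hBc : ∀ i j : Fin 3, Continuous fun x => fderiv ℝ u x (ee j) i := fun i j =>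
    (EuclideanSpace.proj (𝕜 := ℝ) (i := i)).continuous.comp
      ((hu.continuous_fderiv one_ne_zero).clm_apply continuous_const)
  have hucs : ∀ i : Fin 3, HasCompactSupport fun x => u x i := fun i =>
    husupp.comp_left (g := fun z : E3 => z i) rfl
  have hBcs : ∀ i j : Fin 3, HasCompactSupport fun x => fderiv ℝ u x (ee j) i := fun i j =>
    (husupp.fderiv (𝕜 := ℝ)).comp_left (g := fun L : E3 →L[ℝ] E3 => L (ee j) i) rfl
  -- integrability of the various products
  have hPint : ∀ i j : Fin 3, Integrable fun x => fderiv ℝ w x (ee j) i * w x j * u x i :=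
    fun i j => (((hAc i j).mul (hwci j)).mul (huci i)).integrable_of_hasCompactSupport
      ((hucs i).mul_left)
  have hQint : ∀ i j : Fin 3, Integrable fun x => fderiv ℝ w x (ee i) j * w x j * u x i :=
    fun i j => (((hAc j i).mul (hwci j)).mul (huci i)).integrable_of_hasCompactSupport
      ((hucs i).mul_left)
  have hZint : ∀ i j : Fin 3, Integrable fun x => fderiv ℝ w x (ee j) j * (u x i * w x i) :=
    fun i j => ((hAc j j).mul ((huci i).mul (hwci i))).integrable_of_hasCompactSupport
      (((hucs i).mul_right).mul_left)
  have hRint : ∀ i j : Fin 3, Integrable fun x => w x i * w x j * fderiv ℝ u x (ee j) i :=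
    fun i j => (((hwci i).mul (hwci j)).mul (hBc i j)).integrable_of_hasCompactSupport
      ((hBcs i j).mul_left)
  have hSint : ∀ i j : Fin 3, Integrable fun x => w x j * w x j * fderiv ℝ u x (ee i) i :=
    fun i j => (((hwci j).mul (hwci j)).mul (hBc i i)).integrable_of_hasCompactSupport
      ((hBcs i i).mul_left)
  -- first integration by parts
  have ibp1 : ∀ i j : Fin 3,
      ∫ x, fderiv ℝ w x (ee j) i * w x j * u x i
        = -(∫ x, fderiv ℝ w x (ee j) j * (u x i * w x i))
          - ∫ x, w x i * w x j * fderiv ℝ u x (ee j) i := by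
    intro i j
    have hFc : ContDiff ℝ 1 fun y => w y j * u y i :=
      (coord_contDiff hw j).mul (coord_contDiff hu i)
    have hdF : ∀ x, fderiv ℝ (fun y => w y j * u y i) x (ee j)
        = w x j * fderiv ℝ u x (ee j) i + u x i * fderiv ℝ w x (ee j) j := by
      intro x
      rw [fderiv_fun_mul ((coord_contDiff hw j).differentiable one_ne_zero x)
        ((coord_contDiff hu i).differentiable one_ne_zero x)]
      simp only [ContinuousLinearMap.add_apply, ContinuousLinearMap.coe_smul',
        Pi.smul_apply, smul_eq_mul]
      rw [fderiv_coord (hud x) i (ee j), fderiv_coord (hwd x) j (ee j)]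
    have e1 : Integrable fun x => w x j * fderiv ℝ u x (ee j) i * w x i :=
      (((hwci j).mul (hBc i j)).mul (hwci i)).integrable_of_hasCompactSupport
        (((hBcs i j).mul_left).mul_right)
    have e2 : Integrable fun x => u x i * fderiv ℝ w x (ee j) j * w x i :=
      (((huci i).mul (hAc j j)).mul (hwci i)).integrable_of_hasCompactSupport
        (((hucs i).mul_right).mul_right)
    have h1 : Integrable fun x => fderiv ℝ (fun y => w y j * u y i) x (ee j) * w x i := by
      refine (e1.add e2).congr (Filter.Eventually.of_forall fun x => ?_)
      simp only [Pi.add_apply]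
      rw [hdF x]; ring
    have h2 : Integrable fun x => (w x j * u x i) * fderiv ℝ (fun y => w y i) x (ee j) := by
      have base : Integrable fun x => (w x j * u x i) * fderiv ℝ w x (ee j) i :=
        (((hwci j).mul (huci i)).mul (hAc i j)).integrable_of_hasCompactSupport
          (((hucs i).mul_left).mul_right)
      refine base.congr (Filter.Eventually.of_forall fun x => ?_)
      beta_reduce
      rw [fderiv_coord (hwd x) i (ee j)]
    have h3 : Integrable fun x => (w x j * u x i) * w x i :=
      (((hwci j).mul (huci i)).mul (hwci i)).integrable_of_hasCompactSupport
        (((hucs i).mul_left).mul_right)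
    have key := integral_mul_fderiv_eq_neg_fderiv_mul_of_integrable h1 h2 h3
      (fun x _ => hFc.differentiable one_ne_zero x) (fun x _ => (coord_contDiff hw i).differentiable one_ne_zero x)
    have lhs_eq : ∫ x, (w x j * u x i) * fderiv ℝ (fun y => w y i) x (ee j)
        = ∫ x, fderiv ℝ w x (ee j) i * w x j * u x i := by
      refine integral_congr_ae (Filter.Eventually.of_forall fun x => ?_)
      beta_reduce
      rw [fderiv_coord (hwd x) i (ee j)]; ring
    have rhs_eq : ∫ x, fderiv ℝ (fun y => w y j * u y i) x (ee j) * w x i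
        = (∫ x, fderiv ℝ w x (ee j) j * (u x i * w x i))
          + ∫ x, w x i * w x j * fderiv ℝ u x (ee j) i := by
      have hpt : (fun x => fderiv ℝ (fun y => w y j * u y i) x (ee j) * w x i)
          = fun x => fderiv ℝ w x (ee j) j * (u x i * w x i)
            + w x i * w x j * fderiv ℝ u x (ee j) i := by
        funext x; rw [hdF x]; ring
      rw [hpt]
      exact integral_add (hZint i j) (hRint i j)
    calc ∫ x, fderiv ℝ w x (ee j) i * w x j * u x i
        = ∫ x, (w x j * u x i) * fderiv ℝ (fun y => w y i) x (ee j) := lhs_eq.symm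
      _ = -∫ x, fderiv ℝ (fun y => w y j * u y i) x (ee j) * w x i := key
      _ = -((∫ x, fderiv ℝ w x (ee j) j * (u x i * w x i))
            + ∫ x, w x i * w x j * fderiv ℝ u x (ee j) i) := by rw [rhs_eq]
      _ = -(∫ x, fderiv ℝ w x (ee j) j * (u x i * w x i))
            - ∫ x, w x i * w x j * fderiv ℝ u x (ee j) i := by ring
  -- second integration by parts
  have ibp2 : ∀ i j : Fin 3,
      ∫ x, fderiv ℝ w x (ee i) j * w x j * u x i
        = -(1/2) * ∫ x, w x j * w x j * fderiv ℝ u x (ee i) i := by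
    intro i j
    have hFc : ContDiff ℝ 1 fun y => w y j * u y i :=
      (coord_contDiff hw j).mul (coord_contDiff hu i)
    have hdF : ∀ x, fderiv ℝ (fun y => w y j * u y i) x (ee i)
        = w x j * fderiv ℝ u x (ee i) i + u x i * fderiv ℝ w x (ee i) j := by
      intro x
      rw [fderiv_fun_mul ((coord_contDiff hw j).differentiable one_ne_zero x)
        ((coord_contDiff hu i).differentiable one_ne_zero x)]
      simp only [ContinuousLinearMap.add_apply, ContinuousLinearMap.coe_smul',
        Pi.smul_apply, smul_eq_mul]
      rw [fderiv_coord (hud x) i (ee i), fderiv_coord (hwd x) j (ee i)]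
    have e1 : Integrable fun x => w x j * fderiv ℝ u x (ee i) i * w x j :=
      (((hwci j).mul (hBc i i)).mul (hwci j)).integrable_of_hasCompactSupport
        (((hBcs i i).mul_left).mul_right)
    have e2 : Integrable fun x => u x i * fderiv ℝ w x (ee i) j * w x j :=
      (((huci i).mul (hAc j i)).mul (hwci j)).integrable_of_hasCompactSupport
        (((hucs i).mul_right).mul_right)
    have h1 : Integrable fun x => fderiv ℝ (fun y => w y j * u y i) x (ee i) * w x j := by
      refine (e1.add e2).congr (Filter.Eventually.of_forall fun x => ?_)
      simp only [Pi.add_apply]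
      rw [hdF x]; ring
    have h2 : Integrable fun x => (w x j * u x i) * fderiv ℝ (fun y => w y j) x (ee i) := by
      have base : Integrable fun x => (w x j * u x i) * fderiv ℝ w x (ee i) j :=
        (((hwci j).mul (huci i)).mul (hAc j i)).integrable_of_hasCompactSupport
          (((hucs i).mul_left).mul_right)
      refine base.congr (Filter.Eventually.of_forall fun x => ?_)
      beta_reduce
      rw [fderiv_coord (hwd x) j (ee i)]
    have h3 : Integrable fun x => (w x j * u x i) * w x j :=
      (((hwci j).mul (huci i)).mul (hwci j)).integrable_of_hasCompactSupport
        (((hucs i).mul_left).mul_right)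
    have key := integral_mul_fderiv_eq_neg_fderiv_mul_of_integrable h1 h2 h3
      (fun x _ => hFc.differentiable one_ne_zero x) (fun x _ => (coord_contDiff hw j).differentiable one_ne_zero x)
    have lhs_eq : ∫ x, (w x j * u x i) * fderiv ℝ (fun y => w y j) x (ee i)
        = ∫ x, fderiv ℝ w x (ee i) j * w x j * u x i := by
      refine integral_congr_ae (Filter.Eventually.of_forall fun x => ?_)
      beta_reduce
      rw [fderiv_coord (hwd x) j (ee i)]; ring
    have rhs_eq : ∫ x, fderiv ℝ (fun y => w y j * u y i) x (ee i) * w x j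
        = (∫ x, fderiv ℝ w x (ee i) j * w x j * u x i)
          + ∫ x, w x j * w x j * fderiv ℝ u x (ee i) i := by
      have hpt : (fun x => fderiv ℝ (fun y => w y j * u y i) x (ee i) * w x j)
          = fun x => fderiv ℝ w x (ee i) j * w x j * u x i
            + w x j * w x j * fderiv ℝ u x (ee i) i := by
        funext x; rw [hdF x]; ring
      rw [hpt]
      exact integral_add (hQint i j) (hSint i j)
    have hTeq : ∫ x, fderiv ℝ w x (ee i) j * w x j * u x i
        = -((∫ x, fderiv ℝ w x (ee i) j * w x j * u x i)
            + ∫ x, w x j * w x j * fderiv ℝ u x (ee i) i) := by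
      calc ∫ x, fderiv ℝ w x (ee i) j * w x j * u x i
          = ∫ x, (w x j * u x i) * fderiv ℝ (fun y => w y j) x (ee i) := lhs_eq.symm
        _ = -∫ x, fderiv ℝ (fun y => w y j * u y i) x (ee i) * w x j := key
        _ = -((∫ x, fderiv ℝ w x (ee i) j * w x j * u x i)
              + ∫ x, w x j * w x j * fderiv ℝ u x (ee i) i) := by rw [rhs_eq]
    linarith [hTeq]
  -- the divergence-free terms vanish
  have hZzero : ∀ i : Fin 3, ∑ j, ∫ x, fderiv ℝ w x (ee j) j * (u x i * w x i) = 0 := by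
    intro i
    rw [← integral_finset_sum _ fun j _ => hZint i j]
    have hpt : ∀ x : E3, (∑ j, fderiv ℝ w x (ee j) j * (u x i * w x i)) = 0 := by
      intro x
      rw [← Finset.sum_mul]
      have hd : (∑ j, fderiv ℝ w x (ee j) j) = vdiv w x := rfl
      rw [hd, hwdiv x, zero_mul]
    simp only [hpt, integral_zero]
  -- split the main integral into the 18 pieces
  have split1 : ∫ x, ∑ i, ∑ j, fderiv ℝ w x (ee j) i * w x j * u x i
      = ∑ i, ∑ j, ∫ x, fderiv ℝ w x (ee j) i * w x j * u x i := by
    rw [integral_finset_sum _ fun i _ => integrable_finset_sum _ fun j _ => hPint i j]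
    exact Finset.sum_congr rfl fun i _ => integral_finset_sum _ fun j _ => hPint i j
  have split2 : ∫ x, ∑ i, ∑ j, fderiv ℝ w x (ee i) j * w x j * u x i
      = ∑ i, ∑ j, ∫ x, fderiv ℝ w x (ee i) j * w x j * u x i := by
    rw [integral_finset_sum _ fun i _ => integrable_finset_sum _ fun j _ => hQint i j]
    exact Finset.sum_congr rfl fun i _ => integral_finset_sum _ fun j _ => hQint i j
  have hIeq : ∫ x, ⟪cross (curl w x) (w x), u x⟫
      = (∑ i, ∑ j, ∫ x, fderiv ℝ w x (ee j) i * w x j * u x i)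
        - ∑ i, ∑ j, ∫ x, fderiv ℝ w x (ee i) j * w x j * u x i := by
    rw [show (∫ x, ⟪cross (curl w x) (w x), u x⟫)
        = ∫ x, ((∑ i, ∑ j, fderiv ℝ w x (ee j) i * w x j * u x i)
            - ∑ i, ∑ j, fderiv ℝ w x (ee i) j * w x j * u x i) from
      integral_congr_ae (Filter.Eventually.of_forall fun x => pointwise_cross_curl w u x)]
    rw [integral_sub
      (integrable_finset_sum _ fun i _ => integrable_finset_sum _ fun j _ => hPint i j)
      (integrable_finset_sum _ fun i _ => integrable_finset_sum _ fun j _ => hQint i j)]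
    rw [split1, split2]
  -- sum up the integration-by-parts identities
  have sumP : (∑ i, ∑ j, ∫ x, fderiv ℝ w x (ee j) i * w x j * u x i)
      = -∑ i, ∑ j, ∫ x, w x i * w x j * fderiv ℝ u x (ee j) i := by
    have hrow : ∀ i : Fin 3, (∑ j, ∫ x, fderiv ℝ w x (ee j) i * w x j * u x i)
        = -∑ j, ∫ x, w x i * w x j * fderiv ℝ u x (ee j) i := by
      intro i
      have h1 : (∑ j, ∫ x, fderiv ℝ w x (ee j) i * w x j * u x i)
          = (∑ j, -(∫ x, fderiv ℝ w x (ee j) j * (u x i * w x i)))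
            - ∑ j, ∫ x, w x i * w x j * fderiv ℝ u x (ee j) i := by
        rw [← Finset.sum_sub_distrib]
        exact Finset.sum_congr rfl fun j _ => ibp1 i j
      rw [h1, Finset.sum_neg_distrib, hZzero i, neg_zero, zero_sub]
    rw [Finset.sum_congr rfl fun i _ => hrow i, Finset.sum_neg_distrib]
  have sumQ : (∑ i, ∑ j, ∫ x, fderiv ℝ w x (ee i) j * w x j * u x i)
      = -(1/2) * ∑ i, ∑ j, ∫ x, w x j * w x j * fderiv ℝ u x (ee i) i := by
    rw [Finset.mul_sum]
    refine Finset.sum_congr rfl fun i _ => ?_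
    rw [Finset.mul_sum]
    exact Finset.sum_congr rfl fun j _ => ibp2 i j
  -- recombine the sums into single integrals
  have hRsum : (∑ i, ∑ j, ∫ x, w x i * w x j * fderiv ℝ u x (ee j) i)
      = ∫ x, ⟪fderiv ℝ u x (w x), w x⟫ := by
    have hsplit : ∫ x, ∑ i, ∑ j, w x i * w x j * fderiv ℝ u x (ee j) i
        = ∑ i, ∑ j, ∫ x, w x i * w x j * fderiv ℝ u x (ee j) i := by
      rw [integral_finset_sum _ fun i _ => integrable_finset_sum _ fun j _ => hRint i j]
      exact Finset.sum_congr rfl fun i _ => integral_finset_sum _ fun j _ => hRint i j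
    rw [← hsplit]
    refine integral_congr_ae (Filter.Eventually.of_forall fun x => ?_)
    beta_reduce
    rw [inner_eq_sum]
    refine Finset.sum_congr rfl fun i _ => ?_
    rw [clm_apply_decomp (fderiv ℝ u x) (w x) i, Finset.sum_mul]
    exact Finset.sum_congr rfl fun j _ => by ring
  have hSsum : (∑ i, ∑ j, ∫ x, w x j * w x j * fderiv ℝ u x (ee i) i)
      = ∫ x, ‖w x‖^2 * ∑ i, fderiv ℝ u x (ee i) i := by
    have hsplit : ∫ x, ∑ i, ∑ j, w x j * w x j * fderiv ℝ u x (ee i) i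
        = ∑ i, ∑ j, ∫ x, w x j * w x j * fderiv ℝ u x (ee i) i := by
      rw [integral_finset_sum _ fun i _ => integrable_finset_sum _ fun j _ => hSint i j]
      exact Finset.sum_congr rfl fun i _ => integral_finset_sum _ fun j _ => hSint i j
    rw [← hsplit]
    refine integral_congr_ae (Filter.Eventually.of_forall fun x => ?_)
    beta_reduce
    rw [norm_sq_eq_sum, Finset.sum_comm, Finset.sum_mul]
    refine Finset.sum_congr rfl fun j _ => ?_
    rw [Finset.mul_sum]
    exact Finset.sum_congr rfl fun i _ => by ring
  -- integrability of the combined integrands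
  have hinner_cont : Continuous fun x => ⟪fderiv ℝ u x (w x), w x⟫ :=
    Continuous.inner ((hu.continuous_fderiv one_ne_zero).clm_apply hwc) hwc
  have hinner_cs : HasCompactSupport fun x => ⟪fderiv ℝ u x (w x), w x⟫ := by
    refine (husupp.fderiv (𝕜 := ℝ)).mono' ?_
    intro x hx
    simp only [Function.mem_support] at hx
    by_contra h
    apply hx
    rw [image_eq_zero_of_notMem_tsupport h]
    simp
  have hinnerInt : Integrable fun x => ⟪fderiv ℝ u x (w x), w x⟫ :=
    hinner_cont.integrable_of_hasCompactSupport hinner_cs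
  have htr_cont : Continuous fun x => ‖w x‖^2 * ∑ i, fderiv ℝ u x (ee i) i :=
    ((hwc.norm).pow 2).mul (continuous_finset_sum _ fun i _ => hBc i i)
  have htr_cs : HasCompactSupport fun x => ‖w x‖^2 * ∑ i, fderiv ℝ u x (ee i) i := by
    refine (husupp.fderiv (𝕜 := ℝ)).mono' ?_
    intro x hx
    simp only [Function.mem_support] at hx
    by_contra h
    apply hx
    rw [image_eq_zero_of_notMem_tsupport h]
    simp
  have htrInt : Integrable fun x => ‖w x‖^2 * ∑ i, fderiv ℝ u x (ee i) i :=
    htr_cont.integrable_of_hasCompactSupport htr_cs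
  -- the main identity
  have main : ∫ x, ⟪cross (curl w x) (w x), u x⟫
      = ∫ x, (-(⟪fderiv ℝ u x (w x), w x⟫)
          + (1/2) * (‖w x‖^2 * ∑ i, fderiv ℝ u x (ee i) i)) := by
    have hnegInt : Integrable fun x => -(⟪fderiv ℝ u x (w x), w x⟫) := hinnerInt.neg
    have hhalfInt : Integrable fun x =>
        (1/2) * (‖w x‖^2 * ∑ i, fderiv ℝ u x (ee i) i) := htrInt.const_mul (1/2)
    rw [hIeq, sumP, sumQ, hRsum, hSsum]
    rw [integral_add hnegInt hhalfInt, integral_neg, integral_const_mul]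
    ring
  -- the supremum bound
  have hbdd : BddAbove (Set.range fun x => ‖fderiv ℝ u x‖) :=
    ((hu.continuous_fderiv one_ne_zero).norm).bddAbove_range_of_hasCompactSupport
      ((husupp.fderiv (𝕜 := ℝ)).norm)
  have hK : ∀ x, ‖fderiv ℝ u x‖ ≤ ⨆ x, ‖fderiv ℝ u x‖ := fun x => le_ciSup hbdd x
  have hK0 : (0:ℝ) ≤ ⨆ x, ‖fderiv ℝ u x‖ := le_trans (norm_nonneg _) (hK 0)
  have hpt : ∀ x, |(-(⟪fderiv ℝ u x (w x), w x⟫)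
        + (1/2) * (‖w x‖^2 * ∑ i, fderiv ℝ u x (ee i) i))|
      ≤ 5/2 * (⨆ x, ‖fderiv ℝ u x‖) * ‖w x‖^2 := by
    intro x
    have h1 : |⟪fderiv ℝ u x (w x), w x⟫| ≤ ‖fderiv ℝ u x‖ * ‖w x‖^2 := by
      calc |⟪fderiv ℝ u x (w x), w x⟫| ≤ ‖fderiv ℝ u x (w x)‖ * ‖w x‖ :=
            abs_real_inner_le_norm _ _
        _ ≤ (‖fderiv ℝ u x‖ * ‖w x‖) * ‖w x‖ :=
            mul_le_mul_of_nonneg_right ((fderiv ℝ u x).le_opNorm _) (norm_nonneg _)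
        _ = ‖fderiv ℝ u x‖ * ‖w x‖^2 := by ring
    have h2 : |∑ i, fderiv ℝ u x (ee i) i| ≤ 3 * ‖fderiv ℝ u x‖ := by
      calc |∑ i, fderiv ℝ u x (ee i) i| ≤ ∑ i, |fderiv ℝ u x (ee i) i| :=
            Finset.abs_sum_le_sum_abs _ _
        _ ≤ ∑ _i : Fin 3, ‖fderiv ℝ u x‖ := Finset.sum_le_sum fun i _ => by
            calc |fderiv ℝ u x (ee i) i| ≤ ‖fderiv ℝ u x (ee i)‖ := abs_coord_le _ i
              _ ≤ ‖fderiv ℝ u x‖ * ‖(ee i : E3)‖ := (fderiv ℝ u x).le_opNorm _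
              _ = ‖fderiv ℝ u x‖ := by simp [ee, EuclideanSpace.norm_single]
        _ = 3 * ‖fderiv ℝ u x‖ := by
            rw [Finset.sum_const]
            simp
    have hKx := hK x
    have hw2 : (0:ℝ) ≤ ‖w x‖^2 := sq_nonneg _
    have habs : |(-(⟪fderiv ℝ u x (w x), w x⟫)
          + (1/2) * (‖w x‖^2 * ∑ i, fderiv ℝ u x (ee i) i))|
        ≤ |⟪fderiv ℝ u x (w x), w x⟫|
          + (1/2) * (‖w x‖^2 * |∑ i, fderiv ℝ u x (ee i) i|) := by
      refine (abs_add_le _ _).trans ?_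
      rw [abs_neg, abs_mul, abs_mul, abs_of_nonneg hw2,
        abs_of_nonneg (by norm_num : (0:ℝ) ≤ (1:ℝ)/2)]
    refine habs.trans ?_
    nlinarith [h1, h2, hKx, hw2, hK0, norm_nonneg (fderiv ℝ u x)]
  -- conclusion
  calc |∫ x, ⟪cross (curl w x) (w x), u x⟫|
      = |∫ x, (-(⟪fderiv ℝ u x (w x), w x⟫)
          + (1/2) * (‖w x‖^2 * ∑ i, fderiv ℝ u x (ee i) i))| := by rw [main]
    _ ≤ ∫ x, |(-(⟪fderiv ℝ u x (w x), w x⟫)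
          + (1/2) * (‖w x‖^2 * ∑ i, fderiv ℝ u x (ee i) i))| := by
        exact abs_integral_le_integral_abs
    _ ≤ ∫ x, 5/2 * (⨆ x, ‖fderiv ℝ u x‖) * ‖w x‖^2 :=
        integral_mono (hinnerInt.neg.add (htrInt.const_mul (1/2))).abs
          (hwL2.const_mul _) hpt
    _ = (5/2) * (⨆ x, ‖fderiv ℝ u x‖) * ∫ x, ‖w x‖^2 := integral_const_mul _ _

end
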